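/- arXiv:1809.00636 — 3 statements merged into one kernel-verified Lean document; each statement's English description precedes it below -/
import Mathlib

section
/- Let N be a strictly convex C^1-regular norm on ℝ^n. Then the Gauss map G : S_N → S^{n-1} is a homeomorphism from the N-unit sphere onto the Euclidean unit sphere, it is antipodally symmetric, i.e. G(−v) = −G(v) for all v ∈ S_N, and ⟨v, G(v)⟩ ≠ 0 for all v ∈ S_N. -/
open MeasureTheory Set
open scoped ENNReal

section Aux

variable {n : ℕ}

local notation "E" => EuclideanSpace ℝ (Fin n)

-- basic properties
theorem gm_neg (N : E → ℝ) (hNhom : ∀ (c : ℝ) (x), N (c • x) = |c| * N x) (x : E) :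
    N (-x) = N x := by
  have := hNhom (-1) x
  simpa using this

theorem gm_zero (N : E → ℝ) (hN0 : ∀ x, N x = 0 ↔ x = 0) : N 0 = 0 := (hN0 0).mpr rfl

theorem gm_pos (N : E → ℝ) (hN0 : ∀ x, N x = 0 ↔ x = 0)
    (hNhom : ∀ (c : ℝ) (x), N (c • x) = |c| * N x)
    (hNtri : ∀ x y, N (x + y) ≤ N x + N y) {x : E} (hx : x ≠ 0) : 0 < N x := by
  have h1 : (0 : ℝ) ≤ N x := by
    have h := hNtri x (-x)
    simp only [add_neg_cancel, gm_zero N hN0, gm_neg N hNhom] at h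
    linarith
  rcases h1.lt_or_eq with h | h
  · exact h
  · exact absurd ((hN0 x).mp h.symm) hx

theorem gm_upper (N : E → ℝ) (hN0 : ∀ x, N x = 0 ↔ x = 0)
    (hNhom : ∀ (c : ℝ) (x), N (c • x) = |c| * N x)
    (hNtri : ∀ x y, N (x + y) ≤ N x + N y) :
    ∃ C : ℝ, 0 ≤ C ∧ ∀ x : E, N x ≤ C * ‖x‖ := by
  classical
  refine ⟨∑ i : Fin n, N (EuclideanSpace.single i (1 : ℝ)), ?_, ?_⟩
  · exact Finset.sum_nonneg fun i _ => by
      rcases eq_or_ne (EuclideanSpace.single i (1 : ℝ)) 0 with h | h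
      · simp [h, gm_zero N hN0]
      · exact (gm_pos N hN0 hNhom hNtri h).le
  · intro x
    have hdec : x = ∑ i : Fin n, (x i) • EuclideanSpace.single i (1 : ℝ) := by
      have h := (EuclideanSpace.basisFun (Fin n) ℝ).sum_repr x
      simp only [EuclideanSpace.basisFun_apply, EuclideanSpace.basisFun_repr] at h
      exact h.symm
    calc N x = N (∑ i : Fin n, (x i) • EuclideanSpace.single i (1 : ℝ)) := by rw [← hdec]
      _ ≤ ∑ i : Fin n, N ((x i) • EuclideanSpace.single i (1 : ℝ)) :=
          Finset.le_sum_of_subadditive N (gm_zero N hN0).le hNtri _ _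
      _ ≤ ∑ i : Fin n, N (EuclideanSpace.single i (1 : ℝ)) * ‖x‖ := by
          refine Finset.sum_le_sum fun i _ => ?_
          rw [hNhom]
          have h1 : |x i| ≤ ‖x‖ := by
            have h2 := abs_real_inner_le_norm (EuclideanSpace.single i (1:ℝ)) x
            rw [EuclideanSpace.inner_single_left, EuclideanSpace.norm_single] at h2
            simpa using h2
          have h2 : (0 : ℝ) ≤ N (EuclideanSpace.single i (1 : ℝ)) := by
            rcases eq_or_ne (EuclideanSpace.single i (1 : ℝ)) 0 with h | h
            · simp [h, gm_zero N hN0]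
            · exact (gm_pos N hN0 hNhom hNtri h).le
          calc |x i| * N (EuclideanSpace.single i (1:ℝ))
              ≤ ‖x‖ * N (EuclideanSpace.single i (1:ℝ)) := by
                exact mul_le_mul_of_nonneg_right h1 h2
            _ = N (EuclideanSpace.single i (1:ℝ)) * ‖x‖ := mul_comm _ _
      _ = (∑ i : Fin n, N (EuclideanSpace.single i (1 : ℝ))) * ‖x‖ := by
          rw [Finset.sum_mul]


theorem gm_cont (N : E → ℝ) (hN0 : ∀ x, N x = 0 ↔ x = 0)
    (hNhom : ∀ (c : ℝ) (x), N (c • x) = |c| * N x)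
    (hNtri : ∀ x y, N (x + y) ≤ N x + N y) : Continuous N := by
  obtain ⟨C, hC0, hC⟩ := gm_upper N hN0 hNhom hNtri
  have key : ∀ x y : E, N x - N y ≤ C * ‖x - y‖ := by
    intro x y
    have h1 := hNtri (x - y) y
    simp only [sub_add_cancel] at h1
    have h2 := hC (x - y)
    linarith
  apply (LipschitzWith.of_dist_le_mul (K := C.toNNReal) (f := N) ?_).continuous
  intro x y
  rw [Real.dist_eq, dist_eq_norm]
  have h1 := key x y
  have h2 := key y x
  rw [norm_sub_rev] at h2
  have h3 : |N x - N y| ≤ C * ‖x - y‖ := abs_sub_le_iff.mpr ⟨h1, h2⟩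
  calc |N x - N y| ≤ C * ‖x - y‖ := h3
    _ ≤ C.toNNReal * ‖x - y‖ :=
        mul_le_mul_of_nonneg_right (Real.le_coe_toNNReal C) (norm_nonneg _)

theorem gm_compact (N : E → ℝ) (hN0 : ∀ x, N x = 0 ↔ x = 0)
    (hNhom : ∀ (c : ℝ) (x), N (c • x) = |c| * N x)
    (hNtri : ∀ x y, N (x + y) ≤ N x + N y) :
    IsCompact {x : E | N x = 1} := by
  have hclosed : IsClosed {x : E | N x = 1} :=
    isClosed_eq (gm_cont N hN0 hNhom hNtri) continuous_const
  have hbdd : Bornology.IsBounded {x : E | N x = 1} := by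
    rcases (Metric.sphere (0 : E) 1).eq_empty_or_nonempty with hs | hs
    · have hempty : {x : E | N x = 1} = ∅ := by
        ext x
        simp only [mem_setOf_eq, mem_empty_iff_false, iff_false]
        intro hx
        have hx0 : x ≠ 0 := by
          intro h; rw [h, gm_zero N hN0] at hx; norm_num at hx
        have hmem : ‖x‖⁻¹ • x ∈ Metric.sphere (0 : E) 1 := by
          simp [norm_smul, abs_of_pos (inv_pos.2 (norm_pos_iff.mpr hx0)),
            inv_mul_cancel₀ (norm_ne_zero_iff.mpr hx0)]
        rw [hs] at hmem
        exact hmem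
      rw [hempty]
      exact Bornology.isBounded_empty
    · obtain ⟨z, hz, hzmin⟩ := (isCompact_sphere (0 : E) 1).exists_isMinOn hs
        (gm_cont N hN0 hNhom hNtri).continuousOn
      have hz0 : z ≠ 0 := by
        intro h
        rw [h] at hz
        simp at hz
      have hm : 0 < N z := gm_pos N hN0 hNhom hNtri hz0
      rw [Metric.isBounded_iff_subset_closedBall 0]
      refine ⟨(N z)⁻¹, fun x hx => ?_⟩
      have hx1 : N x = 1 := hx
      have hx0 : x ≠ 0 := by
        intro h; rw [h, gm_zero N hN0] at hx1; norm_num at hx1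
      have hxn : (0:ℝ) < ‖x‖ := norm_pos_iff.mpr hx0
      have hmem : ‖x‖⁻¹ • x ∈ Metric.sphere (0 : E) 1 := by
        simp [norm_smul, abs_of_pos (inv_pos.2 hxn), inv_mul_cancel₀ hxn.ne']
      have h1 : N z ≤ N (‖x‖⁻¹ • x) := hzmin hmem
      have h2 : N (‖x‖⁻¹ • x) = ‖x‖⁻¹ := by
        rw [hNhom, abs_of_pos (inv_pos.2 hxn), hx1, mul_one]
      rw [h2] at h1
      simp only [Metric.mem_closedBall, dist_zero_right]
      rw [le_inv_comm₀ hm hxn] at h1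
      exact h1
  exact Metric.isCompact_of_isClosed_isBounded hclosed hbdd


theorem gm_diff {N : E → ℝ} (hNC1 : ContDiffOn ℝ 1 N {(0 : E)}ᶜ) {x : E} (hx : x ≠ 0) :
    DifferentiableAt ℝ N x :=
  (hNC1.differentiableOn one_ne_zero).differentiableAt
    (isOpen_compl_singleton.mem_nhds (by simpa using hx))

theorem gm_inner (N : E → ℝ) (x y : E) :
    (inner ℝ (gradient N x) y : ℝ) = fderiv ℝ N x y := by
  simp only [gradient]
  exact InnerProductSpace.toDual_symm_apply

theorem gm_euler {N : E → ℝ} (hNhom : ∀ (c : ℝ) (x), N (c • x) = |c| * N x)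
    (hNC1 : ContDiffOn ℝ 1 N {(0 : E)}ᶜ) {x : E} (hx : x ≠ 0) :
    fderiv ℝ N x x = N x := by
  have hc : HasDerivAt (fun t : ℝ => t • x) x 1 := by
    simpa using (hasDerivAt_id (1:ℝ)).smul_const x
  have h1 : HasDerivAt (fun t : ℝ => N (t • x)) (fderiv ℝ N x x) 1 := by
    have hf : HasFDerivAt N (fderiv ℝ N x) ((1:ℝ) • x) := by
      rw [one_smul]; exact (gm_diff hNC1 hx).hasFDerivAt
    exact hf.comp_hasDerivAt 1 hc
  have h2 : HasDerivAt (fun t : ℝ => N (t • x)) (N x) 1 := by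
    have heq : (fun t : ℝ => t * N x) =ᶠ[nhds (1:ℝ)] fun t => N (t • x) := by
      filter_upwards [eventually_gt_nhds (by norm_num : (0:ℝ) < 1)] with t ht
      rw [hNhom, abs_of_pos ht]
    exact (hasDerivAt_mul_const (N x)).congr_of_eventuallyEq heq.symm
  exact h1.unique h2

theorem gm_fderiv_le {N : E → ℝ} (hNhom : ∀ (c : ℝ) (x), N (c • x) = |c| * N x)
    (hNtri : ∀ x y, N (x + y) ≤ N x + N y)
    (hNC1 : ContDiffOn ℝ 1 N {(0 : E)}ᶜ) {x : E} (hx : x ≠ 0) (y : E) :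
    fderiv ℝ N x y ≤ N y := by
  have hc : HasDerivAt (fun t : ℝ => x + t • y) y 0 := by
    simpa using ((hasDerivAt_id (0:ℝ)).smul_const y).const_add x
  have hD : HasDerivAt (fun t : ℝ => N (x + t • y)) (fderiv ℝ N x y) 0 := by
    have hf : HasFDerivAt N (fderiv ℝ N x) (x + (0:ℝ) • y) := by
      rw [zero_smul, add_zero]; exact (gm_diff hNC1 hx).hasFDerivAt
    exact hf.comp_hasDerivAt 0 hc
  have htend := hasDerivAt_iff_tendsto_slope.mp hD
  have htend2 : Filter.Tendsto (slope (fun t : ℝ => N (x + t • y)) 0)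
      (nhdsWithin 0 (Set.Ioi 0)) (nhds (fderiv ℝ N x y)) :=
    htend.mono_left (nhdsWithin_mono 0 (fun z hz => ne_of_gt hz))
  refine le_of_tendsto htend2 ?_
  filter_upwards [self_mem_nhdsWithin] with t ht
  have ht0 : (0:ℝ) < t := ht
  have h1 : N (x + t • y) ≤ N x + t * N y := by
    have := hNtri x (t • y)
    rw [hNhom, abs_of_pos ht0] at this
    exact this
  rw [slope_def_field]
  simp only [zero_smul, add_zero, sub_zero]
  rw [div_le_iff₀ ht0, mul_comm]
  linarith

theorem gm_grad_neg {N : E → ℝ} (hNhom : ∀ (c : ℝ) (x), N (c • x) = |c| * N x)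
    (hNC1 : ContDiffOn ℝ 1 N {(0 : E)}ᶜ) {x : E} (hx : x ≠ 0) :
    gradient N (-x) = - gradient N x := by
  have hx' : -x ≠ (0:E) := neg_ne_zero.2 hx
  have h1 : HasFDerivAt N (fderiv ℝ N (-x)) (-x) := (gm_diff hNC1 hx').hasFDerivAt
  have hneg : HasFDerivAt (fun y : E => -y) (-(ContinuousLinearMap.id ℝ E)) x :=
    (hasFDerivAt_id x).neg
  have h2 : HasFDerivAt (fun y : E => N (-y))
      ((fderiv ℝ N (-x)).comp (-(ContinuousLinearMap.id ℝ E))) x := h1.comp x hneg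
  have h3 : (fun y : E => N (-y)) = N := funext fun y => gm_neg N hNhom y
  rw [h3] at h2
  have h4 : fderiv ℝ N x = (fderiv ℝ N (-x)).comp (-(ContinuousLinearMap.id ℝ E)) :=
    h2.fderiv
  have h5 : fderiv ℝ N (-x) = -(fderiv ℝ N x) := by
    rw [h4]
    ext y
    simp
  simp only [gradient, h5, map_neg]


theorem gm_ne0 {N : E → ℝ} (hN0 : ∀ x, N x = 0 ↔ x = 0) {x : E} (hx : N x = 1) : x ≠ 0 := by
  intro h
  rw [h, gm_zero N hN0] at hx
  norm_num at hx

theorem gm_grad_inner_self {N : E → ℝ} (hN0 : ∀ x, N x = 0 ↔ x = 0)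
    (hNhom : ∀ (c : ℝ) (x), N (c • x) = |c| * N x)
    (hNC1 : ContDiffOn ℝ 1 N {(0 : E)}ᶜ) {x : E} (hx : N x = 1) :
    (inner ℝ (gradient N x) x : ℝ) = 1 := by
  rw [gm_inner, gm_euler hNhom hNC1 (gm_ne0 hN0 hx), hx]

theorem gm_grad_ne {N : E → ℝ} (hN0 : ∀ x, N x = 0 ↔ x = 0)
    (hNhom : ∀ (c : ℝ) (x), N (c • x) = |c| * N x)
    (hNC1 : ContDiffOn ℝ 1 N {(0 : E)}ᶜ) {x : E} (hx : N x = 1) :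
    gradient N x ≠ 0 := by
  intro h
  have h1 := gm_grad_inner_self hN0 hNhom hNC1 hx
  rw [h, inner_zero_left] at h1
  norm_num at h1

theorem gm_inj {N : E → ℝ} (hN0 : ∀ x, N x = 0 ↔ x = 0)
    (hNhom : ∀ (c : ℝ) (x), N (c • x) = |c| * N x)
    (hNtri : ∀ x y, N (x + y) ≤ N x + N y)
    (hNsc : ∀ x y, N x = 1 → N y = 1 → x ≠ y → N ((1 / 2 : ℝ) • (x + y)) < 1)
    (hNC1 : ContDiffOn ℝ 1 N {(0 : E)}ᶜ) {x y : E} (hx : N x = 1) (hy : N y = 1)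
    (heq : ‖gradient N x‖⁻¹ • gradient N x = ‖gradient N y‖⁻¹ • gradient N y) : x = y := by
  by_contra hne
  set gx := gradient N x with hgx
  set gy := gradient N y with hgy
  have hgxne : gx ≠ 0 := gm_grad_ne hN0 hNhom hNC1 hx
  have hgyne : gy ≠ 0 := gm_grad_ne hN0 hNhom hNC1 hy
  have hnx : (0:ℝ) < ‖gx‖ := norm_pos_iff.mpr hgxne
  have hny : (0:ℝ) < ‖gy‖ := norm_pos_iff.mpr hgyne
  set c : ℝ := ‖gy‖ * ‖gx‖⁻¹ with hc
  have hcpos : 0 < c := by positivity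
  have hgyeq : gy = c • gx := by
    have h := congrArg (fun z => ‖gy‖ • z) heq
    simp only [smul_smul] at h
    rw [mul_inv_cancel₀ hny.ne', one_smul] at h
    exact h.symm
  have hxx : (inner ℝ gx x : ℝ) = 1 := gm_grad_inner_self hN0 hNhom hNC1 hx
  have hyy : (inner ℝ gy y : ℝ) = 1 := gm_grad_inner_self hN0 hNhom hNC1 hy
  have hble : ∀ z w : E, N z = 1 → (inner ℝ (gradient N z) w : ℝ) ≤ N w := by
    intro z w hz
    rw [gm_inner]
    exact gm_fderiv_le hNhom hNtri hNC1 (gm_ne0 hN0 hz) w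
  -- c ≤ 1
  have h1 : (inner ℝ gy x : ℝ) = c := by
    rw [hgyeq, real_inner_smul_left, hxx, mul_one]
  have h2 : c ≤ 1 := by
    have := hble y x hy
    rw [h1] at this
    rw [hx] at this
    exact this
  -- c ≥ 1
  have hgxeq : gx = c⁻¹ • gy := by
    rw [hgyeq, smul_smul, inv_mul_cancel₀ hcpos.ne', one_smul]
  have h3 : (inner ℝ gx y : ℝ) = c⁻¹ := by
    rw [hgxeq, real_inner_smul_left, hyy, mul_one]
  have h4 : c⁻¹ ≤ 1 := by
    have := hble x y hx
    rw [h3, hy] at this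
    exact this
  have hc1 : c = 1 := by
    have h9 : (1:ℝ) ≤ c := by nlinarith [mul_inv_cancel₀ hcpos.ne']
    linarith
  have h5 : (inner ℝ gx y : ℝ) = 1 := by rw [h3, hc1, inv_one]
  have h6 : (inner ℝ gx ((1/2 : ℝ) • (x + y)) : ℝ) = 1 := by
    rw [real_inner_smul_right, inner_add_right, hxx, h5]
    norm_num
  have h7 := hble x ((1/2 : ℝ) • (x + y)) hx
  rw [h6] at h7
  have h8 := hNsc x y hx hy hne
  linarith


theorem gm_surj {N : E → ℝ} (hN0 : ∀ x, N x = 0 ↔ x = 0)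
    (hNhom : ∀ (c : ℝ) (x), N (c • x) = |c| * N x)
    (hNtri : ∀ x y, N (x + y) ≤ N x + N y)
    (hNC1 : ContDiffOn ℝ 1 N {(0 : E)}ᶜ) {u : E} (hu : ‖u‖ = 1) :
    ∃ x : E, N x = 1 ∧ ‖gradient N x‖⁻¹ • gradient N x = u := by
  have hu0 : u ≠ 0 := by
    intro h; rw [h, norm_zero] at hu; norm_num at hu
  have hNu : 0 < N u := gm_pos N hN0 hNhom hNtri hu0
  have hmem : N ((N u)⁻¹ • u) = 1 := by
    rw [hNhom, abs_of_pos (inv_pos.2 hNu), inv_mul_cancel₀ hNu.ne']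
  have hScompact := gm_compact N hN0 hNhom hNtri
  have hScont : ContinuousOn (fun x : E => (inner ℝ u x : ℝ)) {x : E | N x = 1} :=
    (continuous_const.inner continuous_id).continuousOn
  obtain ⟨x₀, hx₀S, hx₀max⟩ := hScompact.exists_isMaxOn ⟨(N u)⁻¹ • u, hmem⟩ hScont
  have hx₀1 : N x₀ = 1 := hx₀S
  have hx₀0 : x₀ ≠ 0 := gm_ne0 hN0 hx₀1
  set M : ℝ := (inner ℝ u x₀ : ℝ) with hM
  have hMpos : 0 < M := by
    have h1 : (inner ℝ u ((N u)⁻¹ • u) : ℝ) ≤ M := hx₀max hmem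
    rw [real_inner_smul_right, real_inner_self_eq_norm_sq, hu] at h1
    have h2 : (0:ℝ) < (N u)⁻¹ := inv_pos.2 hNu
    nlinarith
  have hbound : ∀ y : E, (inner ℝ u y : ℝ) ≤ M * N y := by
    intro y
    rcases eq_or_ne y 0 with rfl | hy
    · simp [gm_zero N hN0]
    · have hNy : 0 < N y := gm_pos N hN0 hNhom hNtri hy
      have h1 : N ((N y)⁻¹ • y) = 1 := by
        rw [hNhom, abs_of_pos (inv_pos.2 hNy), inv_mul_cancel₀ hNy.ne']
      have h2 : (inner ℝ u ((N y)⁻¹ • y) : ℝ) ≤ M := hx₀max h1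
      rw [real_inner_smul_right] at h2
      calc (inner ℝ u y : ℝ) = N y * ((N y)⁻¹ * (inner ℝ u y : ℝ)) := by
            field_simp
        _ ≤ N y * M := mul_le_mul_of_nonneg_left h2 hNy.le
        _ = M * N y := mul_comm _ _
  have hmin : IsLocalMin (fun y : E => M * N y - (inner ℝ u y : ℝ)) x₀ := by
    apply Filter.Eventually.of_forall
    intro y
    have h1 := hbound y
    have h2 : M * N x₀ - (inner ℝ u x₀ : ℝ) = 0 := by rw [hx₀1, mul_one, ← hM, sub_self]
    simp only
    rw [h2]
    linarith
  have hdh : HasFDerivAt (fun y : E => M * N y - (inner ℝ u y : ℝ))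
      (M • fderiv ℝ N x₀ - (innerSL ℝ u : E →L[ℝ] ℝ)) x₀ := by
    have h1 : HasFDerivAt (fun y : E => M * N y) (M • fderiv ℝ N x₀) x₀ :=
      (gm_diff hNC1 hx₀0).hasFDerivAt.const_mul M
    have h2 : HasFDerivAt (fun y : E => (inner ℝ u y : ℝ)) (innerSL ℝ u : E →L[ℝ] ℝ) x₀ :=
      (innerSL ℝ u : E →L[ℝ] ℝ).hasFDerivAt
    exact h1.sub h2
  have h0 := hmin.hasFDerivAt_eq_zero hdh
  have hgrad : M • gradient N x₀ = u := by
    apply ext_inner_right ℝ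
    intro y
    have h1 := congrArg (fun L : E →L[ℝ] ℝ => L y) h0
    simp only [ContinuousLinearMap.sub_apply, ContinuousLinearMap.smul_apply,
      ContinuousLinearMap.zero_apply, innerSL_apply_apply] at h1
    rw [real_inner_smul_left, gm_inner]
    have h2 : M * (fderiv ℝ N x₀) y - (inner ℝ u y : ℝ) = 0 := by
      simpa [smul_eq_mul] using h1
    linarith [h2]
  have hgradeq : gradient N x₀ = M⁻¹ • u := by
    rw [← hgrad, smul_smul, inv_mul_cancel₀ hMpos.ne', one_smul]
  refine ⟨x₀, hx₀1, ?_⟩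
  rw [hgradeq, norm_smul, hu, mul_one, norm_inv, Real.norm_eq_abs,
    abs_of_pos hMpos, inv_inv, smul_smul, mul_inv_cancel₀ hMpos.ne', one_smul]

end Aux

/-- **Properties of the Gauss map of a strictly convex `C¹`-regular norm**
(Iseli, Lemma 3.1): the Gauss map `G(x) = ∇N(x)/|∇N(x)|` is a homeomorphism from
the `N`-unit sphere `S_N = {x : N x = 1}` onto the Euclidean unit sphere, it is
antipodally symmetric (`G(-v) = -G(v)` on `S_N`), and `⟨v, G v⟩ ≠ 0` on `S_N`. -/
theorem gauss_map_homeomorph (n : ℕ)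
    (N : EuclideanSpace ℝ (Fin n) → ℝ)
    (hN0 : ∀ x, N x = 0 ↔ x = 0)
    (hNhom : ∀ (c : ℝ) (x), N (c • x) = |c| * N x)
    (hNtri : ∀ x y, N (x + y) ≤ N x + N y)
    (hNsc : ∀ x y, N x = 1 → N y = 1 → x ≠ y → N ((1 / 2 : ℝ) • (x + y)) < 1)
    (hNC1 : ContDiffOn ℝ 1 N {(0 : EuclideanSpace ℝ (Fin n))}ᶜ)
    (G : EuclideanSpace ℝ (Fin n) → EuclideanSpace ℝ (Fin n))
    (hG : ∀ x, N x = 1 → G x = ‖gradient N x‖⁻¹ • gradient N x) :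
    (∃ H : {x : EuclideanSpace ℝ (Fin n) // N x = 1} ≃ₜ
        Metric.sphere (0 : EuclideanSpace ℝ (Fin n)) 1,
      ∀ v : {x : EuclideanSpace ℝ (Fin n) // N x = 1},
        (H v : EuclideanSpace ℝ (Fin n)) = G (v : EuclideanSpace ℝ (Fin n))) ∧
    (∀ v, N v = 1 → G (-v) = -G v) ∧
    (∀ v, N v = 1 → (inner ℝ v (G v) : ℝ) ≠ 0) := by
  classical
  refine ⟨?_, ?_, ?_⟩
  · -- homeomorphism
    have hScompact := gm_compact N hN0 hNhom hNtri
    haveI : CompactSpace {x : EuclideanSpace ℝ (Fin n) // N x = 1} :=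
      isCompact_iff_compactSpace.mp hScompact
    have hGnorm : ∀ x, N x = 1 → ‖G x‖ = 1 := by
      intro x hx
      rw [hG x hx, norm_smul, norm_inv, norm_norm,
        inv_mul_cancel₀ (norm_ne_zero_iff.mpr (gm_grad_ne hN0 hNhom hNC1 hx))]
    have hgradcont : ContinuousOn (gradient N) {(0 : EuclideanSpace ℝ (Fin n))}ᶜ := by
      have hf := hNC1.continuousOn_fderiv_of_isOpen isOpen_compl_singleton le_rfl
      exact (InnerProductSpace.toDual ℝ
        (EuclideanSpace ℝ (Fin n))).symm.continuous.comp_continuousOn hf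
    have hGcont : ContinuousOn G {x : EuclideanSpace ℝ (Fin n) | N x = 1} := by
      have hsubset : {x : EuclideanSpace ℝ (Fin n) | N x = 1} ⊆
          {(0 : EuclideanSpace ℝ (Fin n))}ᶜ := fun x hx => by
        simpa using gm_ne0 hN0 hx
      have hg := hgradcont.mono hsubset
      have h2 : ContinuousOn
          (fun x : EuclideanSpace ℝ (Fin n) => ‖gradient N x‖⁻¹ • gradient N x)
          {x : EuclideanSpace ℝ (Fin n) | N x = 1} :=
        (hg.norm.inv₀ fun x hx =>
          norm_ne_zero_iff.mpr (gm_grad_ne hN0 hNhom hNC1 hx)).smul hg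
      exact h2.congr fun x hx => hG x hx
    let f : {x : EuclideanSpace ℝ (Fin n) // N x = 1} →
        Metric.sphere (0 : EuclideanSpace ℝ (Fin n)) 1 :=
      fun v => ⟨G v.1, by rw [mem_sphere_zero_iff_norm]; exact hGnorm v.1 v.2⟩
    have hfc : Continuous f := Continuous.subtype_mk hGcont.restrict _
    have hbij : Function.Bijective f := by
      constructor
      · intro v w h
        apply Subtype.ext
        have h1 : G v.1 = G w.1 := congrArg Subtype.val h
        rw [hG v.1 v.2, hG w.1 w.2] at h1
        exact gm_inj hN0 hNhom hNtri hNsc hNC1 v.2 w.2 h1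
      · intro w
        have hw : ‖(w : EuclideanSpace ℝ (Fin n))‖ = 1 :=
          mem_sphere_zero_iff_norm.mp w.2
        obtain ⟨x, hx1, hx2⟩ := gm_surj hN0 hNhom hNtri hNC1 hw
        refine ⟨⟨x, hx1⟩, ?_⟩
        apply Subtype.ext
        rw [show (f ⟨x, hx1⟩ : EuclideanSpace ℝ (Fin n)) = G x from rfl, hG x hx1]
        exact hx2
    let e := Equiv.ofBijective f hbij
    have hec : Continuous e := hfc
    exact ⟨hec.homeoOfEquivCompactToT2, fun v => rfl⟩
  · -- antipodal
    intro v hv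
    have hv' : N (-v) = 1 := by rw [gm_neg N hNhom]; exact hv
    rw [hG (-v) hv', hG v hv, gm_grad_neg hNhom hNC1 (gm_ne0 hN0 hv), norm_neg, smul_neg]
  · -- inner nonzero
    intro v hv
    rw [hG v hv, real_inner_smul_right]
    have h1 : (inner ℝ v (gradient N v) : ℝ) = 1 := by
      rw [real_inner_comm]
      exact gm_grad_inner_self hN0 hNhom hNC1 hv
    rw [h1, mul_one]
    exact inv_ne_zero (norm_ne_zero_iff.mpr (gm_grad_ne hN0 hNhom hNC1 hv))
end

section
/- Let N be a strictly convex C^1-regular norm on ℝ^n and let w ∈ S^{n-1}, V = w⊥. Then the closest-point projection P^N_V : ℝ^n → V is a linear and surjective map onto V, and its kernel is the line ℝ·v spanned by the unique point v ∈ S_N with G(v) = w (i.e., ker P^N_V = ℝ·G^{-1}(w)). -/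
open MeasureTheory Set
open scoped ENNReal

open Filter

variable {n : ℕ}


lemma auxCPP_nonneg (N : EuclideanSpace ℝ (Fin n) → ℝ)
    (hN0 : ∀ x, N x = 0 ↔ x = 0)
    (hNhom : ∀ (c : ℝ) (x), N (c • x) = |c| * N x)
    (hNtri : ∀ x y, N (x + y) ≤ N x + N y) (x : EuclideanSpace ℝ (Fin n)) :
    0 ≤ N x := by
  have h0 : N 0 = 0 := (hN0 0).mpr rfl
  have hneg : N (-x) = N x := by simpa using hNhom (-1) x
  have := hNtri x (-x)
  simp [h0, hneg] at this
  linarith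

lemma auxCPP_mid (N : EuclideanSpace ℝ (Fin n) → ℝ)
    (hN0 : ∀ x, N x = 0 ↔ x = 0)
    (hNhom : ∀ (c : ℝ) (x), N (c • x) = |c| * N x)
    (hNtri : ∀ x y, N (x + y) ≤ N x + N y)
    (hNsc : ∀ x y, N x = 1 → N y = 1 → x ≠ y → N ((1 / 2 : ℝ) • (x + y)) < 1)
    {a b : EuclideanSpace ℝ (Fin n)} (hab : a ≠ b) (hNab : N a = N b)
    (hpos : N a ≠ 0) : N ((1 / 2 : ℝ) • (a + b)) < N a := by
  have hm : 0 < N a := lt_of_le_of_ne (auxCPP_nonneg N hN0 hNhom hNtri a) (Ne.symm hpos)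
  set m := N a with hm'
  have ha' : N (m⁻¹ • a) = 1 := by
    rw [hNhom, abs_of_pos (inv_pos.mpr hm)]; field_simp; exact hm'.symm
  have hb' : N (m⁻¹ • b) = 1 := by
    rw [hNhom, abs_of_pos (inv_pos.mpr hm)]
    rw [← hNab]; field_simp
  have hne : m⁻¹ • a ≠ m⁻¹ • b := fun h => hab (by
    have := congrArg (fun z => m • z) h
    simpa [smul_smul, mul_inv_cancel₀ (ne_of_gt hm)] using this)
  have := hNsc _ _ ha' hb' hne
  have hkey : N ((1 / 2 : ℝ) • (a + b)) = m * N ((1 / 2 : ℝ) • (m⁻¹ • a + m⁻¹ • b)) := by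
    have : (m : ℝ) • ((1 / 2 : ℝ) • (m⁻¹ • a + m⁻¹ • b)) = (1 / 2 : ℝ) • (a + b) := by
      rw [smul_comm, smul_add, smul_smul, smul_smul,
        mul_inv_cancel₀ (ne_of_gt hm), one_smul, one_smul]
    rw [← this, hNhom, abs_of_pos hm]
  rw [hkey]
  nlinarith

lemma auxCPP_hasDeriv (N : EuclideanSpace ℝ (Fin n) → ℝ)
    {x : EuclideanSpace ℝ (Fin n)} (hd : DifferentiableAt ℝ N x)
    (h : EuclideanSpace ℝ (Fin n)) :
    HasDerivAt (fun t : ℝ => N (x + t • h)) (inner ℝ (gradient N x) h : ℝ) 0 := by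
  have hg : HasGradientAt N (gradient N x) x := hd.hasGradientAt
  have hF : HasFDerivAt N (InnerProductSpace.toDual ℝ _ (gradient N x)) x := hg
  have hc : HasDerivAt (fun t : ℝ => x + t • h) h 0 := by
    simpa using ((hasDerivAt_id (0:ℝ)).smul_const h).const_add x
  have hx0 : x + (0:ℝ) • h = x := by simp
  have := (hx0 ▸ hF).comp_hasDerivAt 0 hc
  simp only [InnerProductSpace.toDual_apply_apply, hx0] at this; exact this

lemma auxCPP_euler (N : EuclideanSpace ℝ (Fin n) → ℝ)
    (hNhom : ∀ (c : ℝ) (x), N (c • x) = |c| * N x)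
    {x : EuclideanSpace ℝ (Fin n)} (hd : DifferentiableAt ℝ N x) :
    (inner ℝ (gradient N x) x : ℝ) = N x := by
  have h1 : HasDerivAt (fun t : ℝ => N (x + t • x)) (inner ℝ (gradient N x) x : ℝ) 0 :=
    auxCPP_hasDeriv N hd x
  have h2 : HasDerivAt (fun t : ℝ => N (x + t • x)) (N x) 0 := by
    have heq : (fun t : ℝ => N (x + t • x)) =ᶠ[nhds (0:ℝ)] fun t => (1 + t) * N x := by
      filter_upwards [eventually_gt_nhds (by norm_num : (-1:ℝ) < 0)] with t ht
      have : x + t • x = (1 + t) • x := by rw [add_smul, one_smul]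
      rw [this, hNhom, abs_of_pos (by linarith)]
    have hD : HasDerivAt (fun t : ℝ => (1 + t) * N x) (N x) 0 := by
      simpa using ((hasDerivAt_id (0:ℝ)).const_add 1).mul_const (N x)
    exact hD.congr_of_eventuallyEq heq
  exact h1.unique h2

lemma auxCPP_subgrad (N : EuclideanSpace ℝ (Fin n) → ℝ)
    (hNhom : ∀ (c : ℝ) (x), N (c • x) = |c| * N x)
    (hNtri : ∀ x y, N (x + y) ≤ N x + N y)
    {x : EuclideanSpace ℝ (Fin n)} (hd : DifferentiableAt ℝ N x)
    (h : EuclideanSpace ℝ (Fin n)) :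
    (inner ℝ (gradient N x) h : ℝ) ≤ N (x + h) - N x := by
  set g : ℝ → ℝ := fun t => N (x + t • h) with hg
  have hD : HasDerivAt g (inner ℝ (gradient N x) h : ℝ) 0 := auxCPP_hasDeriv N hd h
  have hslope : Tendsto (slope g 0) (nhdsWithin 0 (Ioi (0:ℝ)))
      (nhds (inner ℝ (gradient N x) h : ℝ)) :=
    (hasDerivAt_iff_tendsto_slope.mp hD).mono_left
      (nhdsWithin_mono _ (fun t ht => ne_of_gt ht))
  refine le_of_tendsto hslope ?_
  filter_upwards [Ioo_mem_nhdsGT_of_mem (by norm_num : (0:ℝ) ∈ Ico (0:ℝ) 1)] with t ht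
  obtain ⟨ht0, ht1⟩ := ht
  have hconv : g t ≤ (1 - t) * N x + t * N (x + h) := by
    have hx : x + t • h = (1 - t) • x + t • (x + h) := by rw [smul_add]; module
    rw [hg]; simp only
    rw [hx]
    calc N ((1 - t) • x + t • (x + h)) ≤ N ((1-t) • x) + N (t • (x+h)) := hNtri _ _
      _ = (1-t) * N x + t * N (x+h) := by
          rw [hNhom, hNhom, abs_of_pos ht0, abs_of_pos (by linarith)]
  have hg0 : g 0 = N x := by simp [hg]
  have : (g t - g 0) / (t - 0) ≤ N (x + h) - N x := by
    rw [sub_zero, div_le_iff₀ ht0, hg0]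
    nlinarith
  simpa [slope_def_field] using this

/-- **Closest-point projections onto hyperplanes for a strictly convex
`C¹`-regular norm are linear and surjective** (Iseli, Lemma 3.2): for a unit
vector `w` and the hyperplane `V = w⊥`, the closest-point projection
`P = P^N_V : ℝⁿ → V` is linear, has range `V`, and its kernel is the line
spanned by the unique `v ∈ S_N` with `G v = w`, i.e. `ker P = ℝ • G⁻¹(w)`. -/
theorem closest_point_projection_linear (n : ℕ)
    (N : EuclideanSpace ℝ (Fin n) → ℝ)
    (hN0 : ∀ x, N x = 0 ↔ x = 0)
    (hNhom : ∀ (c : ℝ) (x), N (c • x) = |c| * N x)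
    (hNtri : ∀ x y, N (x + y) ≤ N x + N y)
    (hNsc : ∀ x y, N x = 1 → N y = 1 → x ≠ y → N ((1 / 2 : ℝ) • (x + y)) < 1)
    (hNC1 : ContDiffOn ℝ 1 N {(0 : EuclideanSpace ℝ (Fin n))}ᶜ)
    (G : EuclideanSpace ℝ (Fin n) → EuclideanSpace ℝ (Fin n))
    (hG : ∀ x, N x = 1 → G x = ‖gradient N x‖⁻¹ • gradient N x)
    (w : EuclideanSpace ℝ (Fin n)) (hw : ‖w‖ = 1)
    (P : EuclideanSpace ℝ (Fin n) → EuclideanSpace ℝ (Fin n))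
    (hP : ∀ x, (inner ℝ (P x) w : ℝ) = 0 ∧
      ∀ y, (inner ℝ y w : ℝ) = 0 → N (x - P x) ≤ N (x - y)) :
    IsLinearMap ℝ P ∧
    range P = {x | (inner ℝ x w : ℝ) = 0} ∧
    ∃ v, N v = 1 ∧ G v = w ∧ (∀ v', N v' = 1 → G v' = w → v' = v) ∧
      {x | P x = 0} = {x | ∃ c : ℝ, x = c • v} := by
  classical
  have hnn := auxCPP_nonneg N hN0 hNhom hNtri
  have h0 : N 0 = 0 := (hN0 0).mpr rfl
  set u : EuclideanSpace ℝ (Fin n) := w - P w with hu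
  have hww : (inner ℝ w w : ℝ) = 1 := by
    rw [real_inner_self_eq_norm_sq, hw]; norm_num
  have huw : (inner ℝ u w : ℝ) = 1 := by
    rw [hu, inner_sub_left, (hP w).1, hww]; ring
  have hu_min : ∀ z, (inner ℝ z w : ℝ) = 1 → N u ≤ N z := by
    intro z hz
    have h1 : (inner ℝ (w - z) w : ℝ) = 0 := by rw [inner_sub_left, hww, hz]; ring
    have := (hP w).2 (w - z) h1
    simpa using this
  have hu0 : u ≠ 0 := fun h => by simp [h] at huw
  have hNu : 0 < N u :=
    lt_of_le_of_ne (hnn u) (fun h => hu0 ((hN0 u).mp h.symm))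
  -- explicit formula for P
  have hPx : ∀ x, P x = x - (inner ℝ x w : ℝ) • u := by
    intro x
    set c : ℝ := inner ℝ x w with hc
    set q : EuclideanSpace ℝ (Fin n) := x - c • u with hq
    have hqw : (inner ℝ q w : ℝ) = 0 := by
      rw [hq, inner_sub_left, real_inner_smul_left, huw, ← hc]; ring
    have hqmin : ∀ y, (inner ℝ y w : ℝ) = 0 → N (x - q) ≤ N (x - y) := by
      intro y hy
      have hxq : x - q = c • u := by rw [hq]; abel
      have hzw : (inner ℝ (x - y) w : ℝ) = c := by rw [inner_sub_left, hy, ← hc]; ring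
      rw [hxq, hNhom]
      by_cases hc0 : c = 0
      · rw [hc0]; simpa using hnn (x - y)
      · have h1 : (inner ℝ (c⁻¹ • (x - y)) w : ℝ) = 1 := by
          rw [real_inner_smul_left, hzw, inv_mul_cancel₀ hc0]
        have h2 := hu_min _ h1
        rw [hNhom, abs_inv] at h2
        have habs : 0 < |c| := abs_pos.mpr hc0
        have := mul_le_mul_of_nonneg_left h2 (le_of_lt habs)
        rwa [mul_inv_cancel_left₀ (ne_of_gt habs)] at this
    by_contra hne
    have hne' : x - q ≠ x - P x := fun h => hne (by
      have : q = P x := by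
        have := congrArg (fun z => x - z) h
        simpa using h
      rw [← this])
    have heq : N (x - q) = N (x - P x) :=
      le_antisymm (hqmin _ (hP x).1) ((hP x).2 q hqw)
    by_cases h00 : N (x - q) = 0
    · have h1 : x - q = 0 := (hN0 _).mp h00
      have h2 : x - P x = 0 := (hN0 _).mp (by rw [← heq]; exact h00)
      exact hne' (by rw [h1, h2])
    · have hmid := auxCPP_mid N hN0 hNhom hNtri hNsc hne' heq h00
      have hy : (inner ℝ ((1/2 : ℝ) • (q + P x)) w : ℝ) = 0 := by
        rw [real_inner_smul_left, inner_add_left, hqw, (hP x).1]; ring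
      have h3 := (hP x).2 _ hy
      have h4 : x - (1/2 : ℝ) • (q + P x) = (1/2:ℝ) • ((x - q) + (x - P x)) := by module
      rw [h4] at h3
      linarith
  -- linearity
  have hlin : IsLinearMap ℝ P := by
    constructor
    · intro x y
      rw [hPx, hPx, hPx, inner_add_left, add_smul]; abel
    · intro c x
      rw [hPx, hPx, real_inner_smul_left]
      module
  -- range
  have hrange : range P = {x | (inner ℝ x w : ℝ) = 0} := by
    ext x
    constructor
    · rintro ⟨y, rfl⟩; exact (hP y).1
    · intro hx
      exact ⟨x, by rw [hPx, hx, zero_smul, sub_zero]⟩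
  -- the vector v
  set v : EuclideanSpace ℝ (Fin n) := (N u)⁻¹ • u with hv
  have hNv : N v = 1 := by
    rw [hv, hNhom, abs_of_pos (inv_pos.mpr hNu), inv_mul_cancel₀ (ne_of_gt hNu)]
  have hvw : (inner ℝ v w : ℝ) = (N u)⁻¹ := by
    rw [hv, real_inner_smul_left, huw, mul_one]
  have hv0 : v ≠ 0 := fun h => by rw [h, h0] at hNv; norm_num at hNv
  have hdiffAt : ∀ y : EuclideanSpace ℝ (Fin n), y ≠ 0 → DifferentiableAt ℝ N y := by
    intro y hy
    exact (hNC1.contDiffAt (isOpen_compl_singleton.mem_nhds hy)).differentiableAt one_ne_zero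
  have hdv : DifferentiableAt ℝ N v := hdiffAt v hv0
  -- v is the minimum of N on its hyperplane
  have hvmin : ∀ z, (inner ℝ z w : ℝ) = (N u)⁻¹ → (1:ℝ) ≤ N z := by
    intro z hz
    have h1 : (inner ℝ ((N u) • z) w : ℝ) = 1 := by
      rw [real_inner_smul_left, hz, mul_inv_cancel₀ (ne_of_gt hNu)]
    have := hu_min _ h1
    rw [hNhom, abs_of_pos hNu] at this
    nlinarith
  -- gradient at v is orthogonal to w⊥
  have horth : ∀ h : EuclideanSpace ℝ (Fin n), (inner ℝ h w : ℝ) = 0 →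
      (inner ℝ (gradient N v) h : ℝ) = 0 := by
    intro h hh
    have hD := auxCPP_hasDeriv N hdv h
    have hmin : IsLocalMin (fun t : ℝ => N (v + t • h)) 0 := by
      apply Filter.Eventually.of_forall
      intro t
      simp only [zero_smul, add_zero]
      rw [hNv]
      refine hvmin _ ?_
      rw [inner_add_left, hvw]
      have : (inner ℝ (t • h) w : ℝ) = 0 := by rw [real_inner_smul_left, hh, mul_zero]
      rw [this, add_zero]
    exact hmin.hasDerivAt_eq_zero hD
  have hgradv : gradient N v = (N u) • w := by
    have hr : ∃ r : ℝ, r = inner ℝ (gradient N v) w := ⟨_, rfl⟩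
    obtain ⟨r, hr⟩ := hr
    have h1 : (inner ℝ (gradient N v - r • w) w : ℝ) = 0 := by
      rw [inner_sub_left, real_inner_smul_left, hww, ← hr]; ring
    have h2 := horth _ h1
    have h3 : (inner ℝ (gradient N v - r • w) (gradient N v - r • w) : ℝ) = 0 := by
      rw [inner_sub_left, h2, real_inner_smul_left, real_inner_comm, h1]
      ring
    have h4 : gradient N v - r • w = 0 := inner_self_eq_zero.mp h3
    have hgrw : gradient N v = r • w := by rwa [sub_eq_zero] at h4
    have hE := auxCPP_euler N hNhom hdv
    rw [hgrw, real_inner_smul_left, real_inner_comm, hvw, hNv] at hE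
    have hrNu : r = N u := by
      field_simp at hE
      linarith
    rw [hgrw, hrNu]
  have hGv : G v = w := by
    rw [hG v hNv, hgradv, norm_smul, hw, Real.norm_eq_abs, abs_of_pos hNu,
      mul_one, smul_smul, inv_mul_cancel₀ (ne_of_gt hNu), one_smul]
  -- uniqueness of v
  have huniq : ∀ v', N v' = 1 → G v' = w → v' = v := by
    intro v' hNv' hGv'
    have hv'0 : v' ≠ 0 := fun h => by rw [h, h0] at hNv'; norm_num at hNv'
    have hd' : DifferentiableAt ℝ N v' := hdiffAt v' hv'0
    have hg'0 : gradient N v' ≠ 0 := by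
      intro h
      have hw0 : w = 0 := by rw [← hGv', hG v' hNv', h]; simp
      rw [hw0] at hw
      simp at hw
    have hg'pos : 0 < ‖gradient N v'‖ := norm_pos_iff.mpr hg'0
    have hg'w : gradient N v' = ‖gradient N v'‖ • w := by
      rw [hG v' hNv'] at hGv'
      rw [← hGv', smul_smul, mul_inv_cancel₀ (ne_of_gt hg'pos), one_smul]
    have hE' := auxCPP_euler N hNhom hd'
    rw [hg'w, real_inner_smul_left, hNv'] at hE'
    set s : ℝ := inner ℝ v' w with hs
    have hs1 : ‖gradient N v'‖ * s = 1 := by rw [hs, real_inner_comm]; exact hE'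
    have hspos : 0 < s := by nlinarith
    have hmin' : ∀ z, (inner ℝ z w : ℝ) = s → (1:ℝ) ≤ N z := by
      intro z hz
      have hsub := auxCPP_subgrad N hNhom hNtri hd' (z - v')
      have hvz : v' + (z - v') = z := by abel
      rw [hg'w, real_inner_smul_left, hvz, hNv'] at hsub
      have hzz : (inner ℝ w (z - v') : ℝ) = 0 := by
        rw [real_inner_comm, inner_sub_left, hz, ← hs]; ring
      rw [hzz, mul_zero] at hsub
      linarith
    have h1 : (1:ℝ) ≤ N (s • u) := hmin' _ (by rw [real_inner_smul_left, huw, mul_one])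
    have h2 : N (s • u) = s * N u := by rw [hNhom, abs_of_pos hspos]
    have h3 : s * N u ≤ 1 := by
      have hz1 : (inner ℝ (s⁻¹ • v') w : ℝ) = 1 := by
        rw [real_inner_smul_left, ← hs, inv_mul_cancel₀ (ne_of_gt hspos)]
      have := hu_min _ hz1
      rw [hNhom, abs_of_pos (inv_pos.mpr hspos), hNv', mul_one] at this
      calc s * N u ≤ s * s⁻¹ := by nlinarith
        _ = 1 := mul_inv_cancel₀ (ne_of_gt hspos)
    have hNsu : N (s • u) = 1 := le_antisymm (by rw [h2]; exact h3) h1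
    have hveq : v' = s • u := by
      by_contra hvv
      have hmid := auxCPP_mid N hN0 hNhom hNtri hNsc hvv
        (by rw [hNv', hNsu]) (by rw [hNv']; norm_num)
      rw [hNv'] at hmid
      have := hmin' ((1/2:ℝ) • (v' + s • u)) (by
        rw [real_inner_smul_left, inner_add_left, real_inner_smul_left, huw, ← hs]; ring)
      linarith
    have hsNu : s * N u = 1 := by rw [← h2, hNsu]
    have hsval : s = (N u)⁻¹ := by
      have h := congrArg (fun t : ℝ => t * (N u)⁻¹) hsNu
      simpa [mul_assoc, mul_inv_cancel₀ (ne_of_gt hNu)] using h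
    rw [hveq, hsval]
  -- kernel
  have hker : {x | P x = 0} = {x | ∃ c : ℝ, x = c • v} := by
    ext x
    simp only [mem_setOf_eq]
    constructor
    · intro hx
      rw [hPx, sub_eq_zero] at hx
      refine ⟨(inner ℝ x w : ℝ) * N u, ?_⟩
      rw [hv, smul_smul, mul_assoc, mul_inv_cancel₀ (ne_of_gt hNu), mul_one]
      exact hx
    · rintro ⟨c, rfl⟩
      rw [hPx, real_inner_smul_left, hvw, sub_eq_zero, hv, smul_smul]
  exact ⟨hlin, hrange, v, hNv, hGv, huniq, hker⟩
end

section
/- Let N be a strictly convex C^1-regular norm on ℝ^n. Then there exist two vectors v, w ∈ S_N with v ≠ w and v ≠ −w such that the Gauss map fixes their radial directions: G(v) = v/|v| and G(w) = w/|w|, where |·| is the Euclidean norm. -/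
open MeasureTheory Set InnerProductSpace
open scoped ENNReal

-- key lemma: at a local extremum x₀ of ‖·‖² on {N = 1}, the gradient is radial
theorem key_radial (n : ℕ)
    (N : EuclideanSpace ℝ (Fin n) → ℝ)
    (hN0 : ∀ x, N x = 0 ↔ x = 0)
    (hNhom : ∀ (c : ℝ) (x), N (c • x) = |c| * N x)
    (hNC1 : ContDiffOn ℝ 1 N {(0 : EuclideanSpace ℝ (Fin n))}ᶜ)
    (x₀ : EuclideanSpace ℝ (Fin n)) (hx₀ : N x₀ = 1)
    (hextr : IsLocalExtrOn (fun x => ‖x‖ ^ 2) {x | N x = 1} x₀) :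
    gradient N x₀ = (‖x₀‖ ^ 2)⁻¹ • x₀ := by
  have hx0 : x₀ ≠ 0 := by
    intro h; rw [h, (hN0 0).mpr rfl] at hx₀; norm_num at hx₀
  have hcd : ContDiffAt ℝ 1 N x₀ :=
    hNC1.contDiffAt (isOpen_compl_singleton.mem_nhds hx0)
  have hN' : HasStrictFDerivAt N (fderiv ℝ N x₀) x₀ := hcd.hasStrictFDerivAt one_ne_zero
  -- Euler relation
  have heuler : fderiv ℝ N x₀ x₀ = 1 := by
    have hg : HasDerivAt (fun t : ℝ => t • x₀) ((1 : ℝ) • x₀) 1 :=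
      (hasDerivAt_id (1 : ℝ)).smul_const x₀
    have hg' : HasDerivAt (fun t : ℝ => t • x₀) x₀ 1 := by simpa using hg
    have hNfd : HasFDerivAt N (fderiv ℝ N x₀) ((fun t : ℝ => t • x₀) 1) := by
      simpa using hN'.hasFDerivAt
    have hcomp : HasDerivAt (fun t : ℝ => N (t • x₀)) (fderiv ℝ N x₀ x₀) 1 :=
      hNfd.comp_hasDerivAt 1 hg'
    have heq : (fun t : ℝ => N (t • x₀)) =ᶠ[nhds (1 : ℝ)] id := by
      filter_upwards [eventually_gt_nhds (zero_lt_one)] with t ht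
      simp only [id]
      rw [hNhom, hx₀, abs_of_pos ht, mul_one]
    have h2 : HasDerivAt (fun t : ℝ => N (t • x₀)) 1 1 :=
      (hasDerivAt_id (1 : ℝ)).congr_of_eventuallyEq heq
    have := hcomp.unique h2
    simpa using this
  -- Lagrange multipliers
  have hS : {x : EuclideanSpace ℝ (Fin n) | N x = N x₀} = {x | N x = 1} := by rw [hx₀]
  obtain ⟨a, b, hab, heq⟩ :=
    (hS ▸ hextr).exists_multipliers_of_hasStrictFDerivAt_1d hN' (hasStrictFDerivAt_norm_sq x₀)
  have heval : ∀ y, a * fderiv ℝ N x₀ y + 2 * b * ⟪x₀, y⟫_ℝ = 0 := by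
    intro y
    have h := ContinuousLinearMap.ext_iff.mp heq y
    simp only [ContinuousLinearMap.add_apply, ContinuousLinearMap.smul_apply,
      ContinuousLinearMap.zero_apply, smul_eq_mul, two_smul, innerSL_apply_apply] at h
    linarith
  have hx0n : ‖x₀‖ ≠ 0 := norm_ne_zero_iff.mpr hx0
  have hx₀x₀ : ⟪x₀, x₀⟫_ℝ = ‖x₀‖ ^ 2 := real_inner_self_eq_norm_sq x₀
  have h1 : a + 2 * b * ‖x₀‖ ^ 2 = 0 := by
    have := heval x₀; rw [heuler, hx₀x₀] at this; linarith
  have hb : b ≠ 0 := by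
    rintro rfl
    have ha : a = 0 := by linarith
    exact hab (by simp [ha])
  have ha : a ≠ 0 := by
    intro ha
    rw [ha] at h1
    have : 2 * b * ‖x₀‖ ^ 2 ≠ 0 := by positivity
    exact this (by linarith)
  -- so fderiv N x₀ = c • ⟪x₀, ·⟫ with c = -(2b)/a, and a = -2b‖x₀‖² gives c = ‖x₀‖⁻²
  set c : ℝ := (‖x₀‖ ^ 2)⁻¹ with hc
  have hfd : ∀ y, fderiv ℝ N x₀ y = c * ⟪x₀, y⟫_ℝ := by
    intro y
    have h2 := heval y
    have hcval : -(b * 2) / a = c := by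
      rw [hc]
      field_simp
      nlinarith [sq_nonneg (‖x₀‖)]
    field_simp at h2 ⊢
    rw [← hcval]
    field_simp
    linarith
  have htd : fderiv ℝ N x₀ = toDual ℝ (EuclideanSpace ℝ (Fin n)) (c • x₀) := by
    ext y
    rw [toDual_apply_apply, real_inner_smul_left, hfd]
  rw [gradient, htd, LinearIsometryEquiv.symm_apply_apply]


/-- **The Gauss map of a strictly convex `C¹`-regular norm has two fixed radial
directions** (Iseli, Lemma 4.2): there exist `v, w ∈ S_N` with `v ≠ w` and
`v ≠ -w` such that `G(v) = v/|v|` and `G(w) = w/|w|`, where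
`G(x) = ∇N(x)/|∇N(x)|` is the Gauss map and `|·|` is the Euclidean norm. -/
theorem gauss_map_two_fixed_directions (n : ℕ) (hn : 2 ≤ n)
    (N : EuclideanSpace ℝ (Fin n) → ℝ)
    (hN0 : ∀ x, N x = 0 ↔ x = 0)
    (hNhom : ∀ (c : ℝ) (x), N (c • x) = |c| * N x)
    (hNtri : ∀ x y, N (x + y) ≤ N x + N y)
    (hNsc : ∀ x y, N x = 1 → N y = 1 → x ≠ y → N ((1 / 2 : ℝ) • (x + y)) < 1)
    (hNC1 : ContDiffOn ℝ 1 N {(0 : EuclideanSpace ℝ (Fin n))}ᶜ) :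
    ∃ v w : EuclideanSpace ℝ (Fin n), N v = 1 ∧ N w = 1 ∧ v ≠ w ∧ v ≠ -w ∧
      ‖gradient N v‖⁻¹ • gradient N v = ‖v‖⁻¹ • v ∧
      ‖gradient N w‖⁻¹ • gradient N w = ‖w‖⁻¹ • w := by
  haveI : NeZero n := ⟨by omega⟩
  -- nonnegativity
  have hnonneg : ∀ x : (EuclideanSpace ℝ (Fin n)), 0 ≤ N x := by
    intro x
    have h1 : N (x + (-1 : ℝ) • x) ≤ N x + N ((-1 : ℝ) • x) := hNtri _ _
    have h2 : x + (-1 : ℝ) • x = 0 := by module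
    rw [h2, (hN0 0).mpr rfl, hNhom] at h1
    simp at h1
    linarith
  have hscale : ∀ x : (EuclideanSpace ℝ (Fin n)), x ≠ 0 → N x = ‖x‖ * N (‖x‖⁻¹ • x) := by
    intro x hx
    have hxn : ‖x‖ ≠ 0 := norm_ne_zero_iff.mpr hx
    have := hNhom ‖x‖ (‖x‖⁻¹ • x)
    rw [smul_inv_smul₀ hxn, abs_of_pos (by positivity)] at this
    exact this
  -- lower bound on the Euclidean sphere
  have hConOn : ContinuousOn N {(0 : (EuclideanSpace ℝ (Fin n)))}ᶜ := hNC1.continuousOn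
  have hsphere : IsCompact (Metric.sphere (0 : (EuclideanSpace ℝ (Fin n))) 1) := isCompact_sphere 0 1
  have hsub : Metric.sphere (0 : (EuclideanSpace ℝ (Fin n))) 1 ⊆ {(0 : (EuclideanSpace ℝ (Fin n)))}ᶜ := by
    intro x hx h0
    rw [mem_sphere_zero_iff_norm] at hx
    rw [mem_singleton_iff.mp h0] at hx
    simp at hx
  have hne_sph : (Metric.sphere (0 : (EuclideanSpace ℝ (Fin n))) 1).Nonempty :=
    ⟨EuclideanSpace.single (0 : Fin n) (1 : ℝ), by
      rw [mem_sphere_zero_iff_norm, EuclideanSpace.norm_single]; exact norm_one⟩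
  obtain ⟨c, hcS, hcmin⟩ := hsphere.exists_isMinOn hne_sph (hConOn.mono hsub)
  obtain ⟨C, hCS, hCmax⟩ := hsphere.exists_isMaxOn hne_sph (hConOn.mono hsub)
  have hc0 : c ≠ 0 := fun h => by simpa [h] using mem_sphere_zero_iff_norm.mp hcS
  have hcpos : 0 < N c := lt_of_le_of_ne (hnonneg c) (fun h => hc0 ((hN0 c).mp h.symm))
  have hlow : ∀ x : (EuclideanSpace ℝ (Fin n)), x ≠ 0 → N c * ‖x‖ ≤ N x := by
    intro x hx
    have hxn : (0:ℝ) < ‖x‖ := norm_pos_iff.mpr hx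
    have hmem : ‖x‖⁻¹ • x ∈ Metric.sphere (0 : (EuclideanSpace ℝ (Fin n))) 1 := by
      rw [mem_sphere_zero_iff_norm, norm_smul, norm_inv, norm_norm, inv_mul_cancel₀ hxn.ne']
    have h' : N c ≤ N (‖x‖⁻¹ • x) := hcmin hmem
    rw [hscale x hx]
    nlinarith
  have hup : ∀ x : (EuclideanSpace ℝ (Fin n)), N x ≤ N C * ‖x‖ := by
    intro x
    by_cases hx : x = 0
    · rw [hx, (hN0 0).mpr rfl]
      simp
    · have hxn : (0:ℝ) < ‖x‖ := norm_pos_iff.mpr hx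
      have hmem : ‖x‖⁻¹ • x ∈ Metric.sphere (0 : (EuclideanSpace ℝ (Fin n))) 1 := by
        rw [mem_sphere_zero_iff_norm, norm_smul, norm_inv, norm_norm, inv_mul_cancel₀ hxn.ne']
      have h' : N (‖x‖⁻¹ • x) ≤ N C := hCmax hmem
      rw [hscale x hx]
      nlinarith
  -- continuity of N
  have hNcont : Continuous N := by
    rw [continuous_iff_continuousAt]
    intro x
    by_cases hx : x = 0
    · subst hx
      have h0 : Filter.Tendsto N (nhds (0 : (EuclideanSpace ℝ (Fin n)))) (nhds 0) := by
        apply squeeze_zero hnonneg hup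
        have : Filter.Tendsto (fun x : (EuclideanSpace ℝ (Fin n)) => ‖x‖) (nhds 0) (nhds 0) := by
          simpa using continuous_norm.tendsto (0 : (EuclideanSpace ℝ (Fin n)))
        simpa using this.const_mul (N C)
      rw [ContinuousAt, (hN0 0).mpr rfl]
      exact h0
    · exact hConOn.continuousAt (isOpen_compl_singleton.mem_nhds hx)
  -- the set S_N
  set S := {x : (EuclideanSpace ℝ (Fin n)) | N x = 1} with hSdef
  have hSclosed : IsClosed S := isClosed_eq hNcont continuous_const
  have hSbdd : Bornology.IsBounded S := by
    apply (Metric.isBounded_closedBall (x := (0:(EuclideanSpace ℝ (Fin n)))) (r := (N c)⁻¹)).subset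
    intro x hx
    have hx0 : x ≠ 0 := fun h => by simp [hSdef, h, (hN0 0).mpr rfl] at hx
    have := hlow x hx0
    rw [hx] at this
    have h2 : ‖x‖ = (N c)⁻¹ * (N c * ‖x‖) := by field_simp
    rw [Metric.mem_closedBall, dist_zero_right, h2]
    calc (N c)⁻¹ * (N c * ‖x‖) ≤ (N c)⁻¹ * 1 :=
          mul_le_mul_of_nonneg_left this (by positivity)
    _ = (N c)⁻¹ := mul_one _
  have hScpt : IsCompact S := Metric.isCompact_of_isClosed_isBounded hSclosed hSbdd
  -- membership helper
  have hmemS : ∀ u : (EuclideanSpace ℝ (Fin n)), u ≠ 0 → (N u)⁻¹ • u ∈ S := by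
    intro u hu
    have hNu : 0 < N u := lt_of_le_of_ne (hnonneg u) (fun h => hu ((hN0 u).mp h.symm))
    simp only [hSdef, mem_setOf_eq, hNhom, abs_of_pos (inv_pos.mpr hNu)]
    field_simp
  have i0 : Fin n := ⟨0, by omega⟩
  have hu0 : (EuclideanSpace.single (⟨0, by omega⟩ : Fin n) (1:ℝ)) ≠ 0 := by
    intro h
    have := congrArg (fun z : EuclideanSpace ℝ (Fin n) => z ⟨0, by omega⟩) h
    simp [EuclideanSpace.single_apply] at this
  have hSne : S.Nonempty := ⟨_, hmemS _ hu0⟩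
  -- extrema of ‖·‖² on S
  obtain ⟨v, hvS, hvmax⟩ := hScpt.exists_isMaxOn hSne (continuous_norm.pow 2).continuousOn
  obtain ⟨w, hwS, hwmin⟩ := hScpt.exists_isMinOn hSne (continuous_norm.pow 2).continuousOn
  have hkey : ∀ x : (EuclideanSpace ℝ (Fin n)), x ∈ S → IsLocalExtrOn (fun y : (EuclideanSpace ℝ (Fin n)) => ‖y‖ ^ 2) S x →
      ‖gradient N x‖⁻¹ • gradient N x = ‖x‖⁻¹ • x := by
    intro x hxS hx
    have hx0 : x ≠ 0 := fun h => by simp [hSdef, h, (hN0 0).mpr rfl] at hxS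
    have hg := key_radial n N hN0 hNhom hNC1 x hxS hx
    rw [hg, norm_smul, smul_smul]
    congr 1
    have hxn : (0:ℝ) < ‖x‖ := norm_pos_iff.mpr hx0
    rw [Real.norm_eq_abs, abs_inv, abs_pow, abs_norm]
    field_simp
  have hloc_max : IsLocalExtrOn (fun y : (EuclideanSpace ℝ (Fin n)) => ‖y‖ ^ 2) S v :=
    Or.inr (hvmax.filter_mono (Filter.le_principal_iff.mpr self_mem_nhdsWithin))
  have hloc_min : IsLocalExtrOn (fun y : (EuclideanSpace ℝ (Fin n)) => ‖y‖ ^ 2) S w :=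
    Or.inl (hwmin.filter_mono (Filter.le_principal_iff.mpr self_mem_nhdsWithin))
  by_cases hvw : ‖v‖ = ‖w‖
  · -- ‖·‖ is constant on S; pick two coordinate directions
    have hconst : ∀ x ∈ S, ‖x‖ ^ 2 = ‖v‖ ^ 2 := by
      intro x hx
      have h1 := hvmax hx
      have h2 := hwmin hx
      simp only [mem_setOf_eq, Pi.pow_apply] at h1 h2
      have : ‖w‖ ^ 2 = ‖v‖ ^ 2 := by rw [hvw]
      linarith
    set u₀ : (EuclideanSpace ℝ (Fin n)) := EuclideanSpace.single (⟨0, by omega⟩ : Fin n) (1:ℝ) with hu₀def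
    set u₁ : (EuclideanSpace ℝ (Fin n)) := EuclideanSpace.single (⟨1, by omega⟩ : Fin n) (1:ℝ) with hu₁def
    have hu1 : u₁ ≠ 0 := by
      intro h
      have := congrArg (fun z : EuclideanSpace ℝ (Fin n) => z ⟨1, by omega⟩) h
      simp [hu₁def, EuclideanSpace.single_apply] at this
    set v₁ : (EuclideanSpace ℝ (Fin n)) := (N u₀)⁻¹ • u₀ with hv₁def
    set w₁ : (EuclideanSpace ℝ (Fin n)) := (N u₁)⁻¹ • u₁ with hw₁def
    have hv₁S : v₁ ∈ S := hmemS _ hu0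
    have hw₁S : w₁ ∈ S := hmemS _ hu1
    have hNu₀ : 0 < N u₀ := lt_of_le_of_ne (hnonneg u₀) (fun h => hu0 ((hN0 u₀).mp h.symm))
    have h01 : (⟨0, by omega⟩ : Fin n) ≠ (⟨1, by omega⟩ : Fin n) := by
      simp [Fin.ext_iff]
    have happ0 : v₁ ⟨0, by omega⟩ = (N u₀)⁻¹ := by
      simp [hv₁def, hu₀def, PiLp.smul_apply, EuclideanSpace.single_apply]
    have happ0w : w₁ ⟨0, by omega⟩ = 0 := by
      simp [hw₁def, hu₁def, PiLp.smul_apply, EuclideanSpace.single_apply, h01]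
    have hne1 : v₁ ≠ w₁ := by
      intro h
      have := congrArg (fun z : EuclideanSpace ℝ (Fin n) => z ⟨0, by omega⟩) h
      rw [happ0, happ0w] at this
      exact (inv_ne_zero hNu₀.ne') this
    have hne2 : v₁ ≠ -w₁ := by
      intro h
      have := congrArg (fun z : EuclideanSpace ℝ (Fin n) => z ⟨0, by omega⟩) h
      have hneg : (-w₁) (⟨0, by omega⟩ : Fin n) = 0 := by
        rw [show (-w₁) (⟨0, by omega⟩ : Fin n) = -(w₁ ⟨0, by omega⟩) from rfl, happ0w, neg_zero]
      rw [happ0, hneg] at this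
      exact (inv_ne_zero hNu₀.ne') this
    have hmax₁ : ∀ x ∈ S, IsMaxOn (fun y : (EuclideanSpace ℝ (Fin n)) => ‖y‖ ^ 2) S x := by
      intro x hx y hy
      simp only [mem_setOf_eq]
      rw [hconst y hy, hconst x hx]
    refine ⟨v₁, w₁, show N v₁ = 1 from hv₁S, show N w₁ = 1 from hw₁S, hne1, hne2, ?_, ?_⟩
    · exact hkey v₁ hv₁S (Or.inr ((hmax₁ v₁ hv₁S).filter_mono
        (Filter.le_principal_iff.mpr self_mem_nhdsWithin)))
    · exact hkey w₁ hw₁S (Or.inr ((hmax₁ w₁ hw₁S).filter_mono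
        (Filter.le_principal_iff.mpr self_mem_nhdsWithin)))
  · have hne1 : v ≠ w := fun h => hvw (by rw [h])
    have hne2 : v ≠ -w := by
      intro h
      apply hvw
      rw [h, norm_neg]
    exact ⟨v, w, show N v = 1 from hvS, show N w = 1 from hwS, hne1, hne2, hkey v hvS hloc_max, hkey w hwS hloc_min⟩
end
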